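/- Let f : ℕ² → ℝ have finite support, and define its Poisson generating transform Λf(y₁,y₂) = ∑_{k₁,k₂ ∈ ℕ} f(k₁,k₂) y₁^{k₁} y₂^{k₂}/(k₁! k₂!). Let L_d be the single-edge discrete harmonic generator L_d f(n₁,n₂) = ∑_{k=1}^{n₁}(1/k)(f(n₁−k,n₂+k) − f(n₁,n₂)) + ∑_{k=1}^{n₂}(1/k)(f(n₁+k,n₂−k) − f(n₁,n₂)). Then for all y₁, y₂ ≥ 0, Λ(L_d f)(y₁,y₂) = ∫₀¹ u^{−1} [ Λf(y₁(1−u), y₂ + u y₁) + Λf(y₁ + u y₂, y₂(1−u)) − 2 Λf(y₁,y₂) ] du, where the u-integral converges absolutely. (This is the Poisson intertwining between the discrete and the continuous harmonic models on a single edge.) -/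

import Mathlib

open MeasureTheory Real Set intervalIntegral

/-- Poisson generating transform of a function on ℕ². -/
noncomputable def poissonTransform (f : ℕ × ℕ → ℝ) (y₁ y₂ : ℝ) : ℝ :=
  ∑' k : ℕ × ℕ, f k * y₁ ^ k.1 * y₂ ^ k.2 / (k.1.factorial * k.2.factorial)

/-- Single-edge discrete harmonic generator. -/
noncomputable def discreteHarmonicGen (f : ℕ × ℕ → ℝ) (n : ℕ × ℕ) : ℝ :=
  (∑ k ∈ Finset.Icc 1 n.1, (k : ℝ)⁻¹ * (f (n.1 - k, n.2 + k) - f n)) +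
  (∑ k ∈ Finset.Icc 1 n.2, (k : ℝ)⁻¹ * (f (n.1 + k, n.2 - k) - f n))

lemma beta_nat : ∀ (a k : ℕ), ∫ u in (0:ℝ)..1, u ^ k * (1 - u) ^ a
    = (k.factorial * a.factorial : ℝ) / (k + a + 1).factorial := by
  intro a
  induction a with
  | zero =>
    intro k
    simp only [pow_zero, mul_one, integral_pow, Nat.factorial_zero, Nat.cast_one]
    have hk : (k.factorial:ℝ) ≠ 0 := by positivity
    rw [show k + 0 + 1 = k + 1 from rfl, Nat.factorial_succ]
    push_cast
    field_simp
    simp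
  | succ a ih =>
    intro k
    have hu : ∀ x ∈ uIcc (0:ℝ) 1, HasDerivAt (fun u : ℝ => (1 - u) ^ (a+1))
        (-( (a+1) * (1 - x) ^ a)) x := by
      intro x _
      have h : HasDerivAt (fun u : ℝ => 1 - u) (-1) x := by
        simpa using (hasDerivAt_id x).const_sub 1
      have := (h.pow (a+1))
      refine HasDerivAt.congr_deriv (by exact this) ?_
      push_cast
      ring
    have hv : ∀ x ∈ uIcc (0:ℝ) 1, HasDerivAt (fun u : ℝ => u ^ (k+1) / (k+1))
        (x ^ k) x := by
      intro x _
      have := (hasDerivAt_pow (k+1) x).div_const (k+1)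
      refine HasDerivAt.congr_deriv (by exact this) ?_
      simp only [Nat.add_sub_cancel]
      push_cast
      field_simp
    have H := integral_mul_deriv_eq_deriv_mul hu hv
      (by apply Continuous.intervalIntegrable; continuity)
      (by apply Continuous.intervalIntegrable; continuity)
    -- H : ∫ (1-u)^(a+1) * u^k = [...] - ∫ (-(a+1)(1-u)^a) * (u^(k+1)/(k+1))
    have e1 : ∫ u in (0:ℝ)..1, u ^ k * (1-u)^(a+1)
        = ∫ u in (0:ℝ)..1, (1-u)^(a+1) * u ^ k := by
      congr 1; ext u; ring
    rw [e1, H]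
    simp only [one_pow, zero_pow, Nat.succ_ne_zero]
    have e2 : ∫ u in (0:ℝ)..1, (-( (a+1:ℝ) * (1 - u) ^ a)) * (u ^ (k+1) / (k+1))
        = (-( (a+1:ℝ) / (k+1))) * ∫ u in (0:ℝ)..1, u ^ (k+1) * (1-u)^a := by
      rw [← intervalIntegral.integral_const_mul]
      congr 1; ext u; ring
    rw [e2, ih (k+1)]
    have h1 : ((k+1).factorial : ℝ) = (k+1) * k.factorial := by
      rw [Nat.factorial_succ]; push_cast; ring
    have h2 : ((k + (a+1) + 1).factorial : ℝ) = ((k+1) + a + 1).factorial := by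
      norm_num; ring_nf
    rw [h2, h1]
    have h3 : ((a+1).factorial : ℝ) = (a+1) * a.factorial := by
      rw [Nat.factorial_succ]; push_cast; ring
    rw [h3]
    have hk : ((k:ℝ)+1) ≠ 0 := by positivity
    have hfac : (((k+1) + a + 1).factorial : ℝ) ≠ 0 := by positivity
    field_simp
    ring

lemma beta_nat_Ioo (a k : ℕ) : ∫ u in Ioo (0:ℝ) 1, u ^ k * (1 - u) ^ a
    = (k.factorial * a.factorial : ℝ) / (k + a + 1).factorial := by
  rw [← MeasureTheory.integral_Ioc_eq_integral_Ioo, ← intervalIntegral.integral_of_le zero_le_one,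
    beta_nat a k]

lemma cont_integrableOn {g : ℝ → ℝ} (hg : Continuous g) :
    IntegrableOn g (Ioo (0:ℝ) 1) volume :=
  (hg.integrableOn_Icc (a := 0) (b := 1)).mono_set Ioo_subset_Icc_self

lemma harm (a : ℕ) :
    IntegrableOn (fun u : ℝ => u⁻¹ * ((1-u)^a - 1)) (Ioo 0 1) volume ∧
    ∫ u in Ioo (0:ℝ) 1, u⁻¹ * ((1-u)^a - 1) = -∑ k ∈ Finset.Icc 1 a, (k:ℝ)⁻¹ := by
  induction a with
  | zero => simp
  | succ a ih =>
    have key : ∀ u ∈ Ioo (0:ℝ) 1, u⁻¹ * ((1-u)^(a+1) - 1)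
        = u⁻¹ * ((1-u)^a - 1) - (1-u)^a := by
      intro u hu
      have hu0 : u ≠ 0 := ne_of_gt hu.1
      field_simp
      ring
    have hcont : IntegrableOn (fun u : ℝ => (1-u)^a) (Ioo 0 1) volume :=
      cont_integrableOn (by continuity)
    have hint : IntegrableOn (fun u : ℝ => u⁻¹ * ((1-u)^(a+1) - 1)) (Ioo 0 1) volume := by
      rw [integrableOn_congr_fun key measurableSet_Ioo]
      exact ih.1.sub hcont
    refine ⟨hint, ?_⟩
    rw [MeasureTheory.setIntegral_congr_fun measurableSet_Ioo key,
      MeasureTheory.integral_sub ih.1 hcont, ih.2]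
    have : ∫ u in Ioo (0:ℝ) 1, (1-u)^a = (1:ℝ)/(a+1) := by
      have := beta_nat_Ioo a 0
      simp only [pow_zero, one_mul, Nat.factorial_zero, Nat.cast_one] at this
      rw [this, show 0 + a + 1 = a + 1 from by ring, Nat.factorial_succ]
      have : (a.factorial : ℝ) ≠ 0 := by positivity
      push_cast
      field_simp
    rw [this, Finset.sum_Icc_succ_top (by omega : 1 ≤ a + 1)]
    push_cast
    ring

lemma coeff_eq (a b k : ℕ) (hk1 : 1 ≤ k) (hkb : k ≤ b) :
    (b.choose k : ℝ) * (((k-1).factorial * a.factorial : ℝ) / ((k-1) + a + 1).factorial)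
    = (a.factorial * b.factorial : ℝ) * ((k:ℝ)⁻¹ * (1 / ((a+k).factorial * (b-k).factorial))) := by
  have h1 : (k-1) + a + 1 = a + k := by omega
  rw [h1]
  have e1 : (k:ℝ) * ((k-1).factorial : ℝ) = (k.factorial : ℝ) := by
    exact_mod_cast congrArg (Nat.cast (R := ℝ)) (Nat.mul_factorial_pred (by omega))
  have e2 : (b.choose k : ℝ) * ((k.factorial : ℝ) * ((b-k).factorial : ℝ)) = (b.factorial : ℝ) := by
    have h := Nat.choose_mul_factorial_mul_factorial hkb
    rw [mul_assoc] at h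
    exact_mod_cast congrArg (Nat.cast (R := ℝ)) h
  have hk0 : (k:ℝ) ≠ 0 := by positivity
  have hak : ((a+k).factorial : ℝ) ≠ 0 := by positivity
  have hbk : ((b-k).factorial : ℝ) ≠ 0 := by positivity
  field_simp
  linear_combination ((b.choose k : ℝ) * ((b-k).factorial:ℝ)) * e1 + e2

lemma sum_Icc_one (n : ℕ) (f : ℕ → ℝ) :
    ∑ k ∈ Finset.Icc 1 n, f k = ∑ i ∈ Finset.range n, f (1+i) := by
  rw [← Finset.Ico_add_one_right_eq_Icc, Finset.sum_Ico_eq_sum_range]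
  simp

lemma half_int (a b : ℕ) (z w : ℝ) :
    IntegrableOn (fun u : ℝ => u⁻¹ * ((z*(1-u))^a * (w + u*z)^b - z^a*w^b)) (Ioo 0 1) volume ∧
    ∫ u in Ioo (0:ℝ) 1, u⁻¹ * ((z*(1-u))^a * (w + u*z)^b - z^a*w^b)
      = (a.factorial * b.factorial : ℝ) *
          ((∑ k ∈ Finset.Icc 1 b, (k:ℝ)⁻¹ * (z^(a+k) * w^(b-k) / ((a+k).factorial * (b-k).factorial)))
           - (∑ k ∈ Finset.Icc 1 a, (k:ℝ)⁻¹) * (z^a * w^b / (a.factorial * b.factorial))) := by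
  have key : ∀ u ∈ Ioo (0:ℝ) 1, u⁻¹ * ((z*(1-u))^a * (w + u*z)^b - z^a*w^b)
      = z^a*w^b * (u⁻¹ * ((1-u)^a - 1)) +
        ∑ k ∈ Finset.Icc 1 b, (b.choose k : ℝ) * z^(a+k) * w^(b-k) * (u^(k-1) * (1-u)^a) := by
    intro u hu
    have hu0 : u ≠ 0 := ne_of_gt hu.1
    have expand : (w + u*z)^b = ∑ k ∈ Finset.range (b+1), (u*z)^k * w^(b-k) * (b.choose k : ℝ) := by
      rw [add_comm, add_pow]
    rw [expand, Finset.sum_range_succ', sum_Icc_one]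
    simp only [pow_zero, one_mul, Nat.sub_zero, Nat.choose_zero_right,
      Nat.cast_one, mul_one]
    have split : ∀ (A S T c : ℝ), u⁻¹ * (A*(S+T) - c) = u⁻¹*(A*S) + u⁻¹*(A*T - c) := by
      intros; ring
    rw [split, Finset.mul_sum, Finset.mul_sum]
    rw [add_comm (∑ _x ∈ Finset.range b, _) _]
    congr 1
    · rw [mul_pow]; ring
    · refine Finset.sum_congr rfl fun i _ => ?_
      have h1 : (1 + i) - 1 = i := by omega
      have h2 : b - (i+1) = b - (1+i) := by omega
      have h3 : i + 1 = 1 + i := by omega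
      rw [h1, h2, h3, mul_pow, mul_pow, pow_add]
      have h4 : u⁻¹ * u ^ (1+i) = u ^ i := by
        rw [pow_add, pow_one]
        field_simp
      field_simp
      ring
  have hcont : ∀ k : ℕ, IntegrableOn
      (fun u : ℝ => (b.choose k : ℝ) * z^(a+k) * w^(b-k) * (u^(k-1) * (1-u)^a)) (Ioo 0 1) volume :=
    fun k => cont_integrableOn (by continuity)
  have hint1 : IntegrableOn (fun u : ℝ => z^a*w^b * (u⁻¹ * ((1-u)^a - 1))) (Ioo 0 1) volume :=
    (harm a).1.const_mul _
  have hint2 : IntegrableOn (fun u : ℝ =>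
      ∑ k ∈ Finset.Icc 1 b, (b.choose k : ℝ) * z^(a+k) * w^(b-k) * (u^(k-1) * (1-u)^a))
      (Ioo 0 1) volume :=
    MeasureTheory.integrable_finset_sum _ fun k _ => hcont k
  constructor
  · rw [integrableOn_congr_fun key measurableSet_Ioo]
    exact hint1.add hint2
  rw [MeasureTheory.setIntegral_congr_fun measurableSet_Ioo key,
    MeasureTheory.integral_add hint1 hint2, MeasureTheory.integral_finset_sum _ fun k _ => hcont k]
  have t1 : ∫ u in Ioo (0:ℝ) 1, z^a*w^b * (u⁻¹ * ((1-u)^a - 1))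
      = z^a*w^b * (-∑ k ∈ Finset.Icc 1 a, (k:ℝ)⁻¹) := by
    rw [MeasureTheory.integral_const_mul, (harm a).2]
  have t2 : ∀ k ∈ Finset.Icc 1 b,
      (∫ u in Ioo (0:ℝ) 1, (b.choose k : ℝ) * z^(a+k) * w^(b-k) * (u^(k-1) * (1-u)^a))
      = (a.factorial * b.factorial : ℝ) * ((k:ℝ)⁻¹ * (z^(a+k) * w^(b-k) / ((a+k).factorial * (b-k).factorial))) := by
    intro k hk
    rw [Finset.mem_Icc] at hk
    rw [MeasureTheory.integral_const_mul, beta_nat_Ioo]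
    have := coeff_eq a b k hk.1 hk.2
    have expand : (b.choose k : ℝ) * z^(a+k) * w^(b-k) * (((k-1).factorial * a.factorial : ℝ) / ((k-1) + a + 1).factorial)
        = ((b.choose k : ℝ) * (((k-1).factorial * a.factorial : ℝ) / ((k-1) + a + 1).factorial)) * (z^(a+k) * w^(b-k)) := by ring
    rw [expand, this]
    ring
  rw [t1, Finset.sum_congr rfl t2, ← Finset.mul_sum]
  have hab : (a.factorial * b.factorial : ℝ) ≠ 0 := by positivity
  field_simp
  ring

lemma pt_eq_sum (g : ℕ × ℕ → ℝ) (s : Finset (ℕ × ℕ)) (hs : ∀ m, g m ≠ 0 → m ∈ s) (y₁ y₂ : ℝ) :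
    poissonTransform g y₁ y₂
      = ∑ m ∈ s, g m * y₁ ^ m.1 * y₂ ^ m.2 / (m.1.factorial * m.2.factorial) := by
  apply tsum_eq_sum
  intro m hm
  have : g m = 0 := by
    by_contra h
    exact hm (hs m h)
  simp [this]

lemma reindex1 (S T : Finset (ℕ × ℕ)) (f M : ℕ × ℕ → ℝ)
    (hS : ∀ m, f m ≠ 0 → m ∈ S)
    (hT : ∀ m ∈ S, ∀ k ∈ Finset.Icc 1 m.2, ((m.1 + k, m.2 - k) : ℕ × ℕ) ∈ T) :
    ∑ n ∈ T, ∑ k ∈ Finset.Icc 1 n.1, (k:ℝ)⁻¹ * f (n.1 - k, n.2 + k) * M n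
      = ∑ m ∈ S, ∑ k ∈ Finset.Icc 1 m.2, f m * ((k:ℝ)⁻¹ * M (m.1 + k, m.2 - k)) := by
  rw [Finset.sum_sigma', Finset.sum_sigma']
  have drop : ∑ p ∈ T.sigma fun n => Finset.Icc 1 n.1,
        ((p.2:ℝ)⁻¹ * f (p.1.1 - p.2, p.1.2 + p.2) * M p.1)
      = ∑ p ∈ (T.sigma fun n => Finset.Icc 1 n.1).filter
          (fun p => ((p.1.1 - p.2, p.1.2 + p.2) : ℕ × ℕ) ∈ S),
        ((p.2:ℝ)⁻¹ * f (p.1.1 - p.2, p.1.2 + p.2) * M p.1) := by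
    refine (Finset.sum_filter_of_ne ?_).symm
    intro p hp h
    by_contra hs
    have : f (p.1.1 - p.2, p.1.2 + p.2) = 0 := by
      by_contra h0
      exact hs (hS _ h0)
    simp [this] at h
  rw [drop]
  refine Finset.sum_nbij'
    (i := fun p => ⟨(p.1.1 - p.2, p.1.2 + p.2), p.2⟩)
    (j := fun q => ⟨(q.1.1 + q.2, q.1.2 - q.2), q.2⟩) ?_ ?_ ?_ ?_ ?_
  · rintro ⟨⟨n1, n2⟩, k⟩ hp
    simp only [Finset.mem_filter, Finset.mem_sigma, Finset.mem_Icc] at hp ⊢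
    exact ⟨hp.2, by omega, by omega⟩
  · rintro ⟨⟨m1, m2⟩, k⟩ hq
    simp only [Finset.mem_filter, Finset.mem_sigma, Finset.mem_Icc] at hq ⊢
    refine ⟨⟨hT _ hq.1 k (Finset.mem_Icc.2 hq.2), by omega, by omega⟩, ?_⟩
    have h1 : m1 + k - k = m1 := by omega
    have h2 : m2 - k + k = m2 := by omega
    rw [h1, h2]
    exact hq.1
  · rintro ⟨⟨n1, n2⟩, k⟩ hp
    simp only [Finset.mem_filter, Finset.mem_sigma, Finset.mem_Icc] at hp
    have h1 : n1 - k + k = n1 := by omega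
    have h2 : n2 + k - k = n2 := by omega
    simp [h1, h2]
  · rintro ⟨⟨m1, m2⟩, k⟩ hq
    simp only [Finset.mem_filter, Finset.mem_sigma, Finset.mem_Icc] at hq
    have h1 : m1 + k - k = m1 := by omega
    have h2 : m2 - k + k = m2 := by omega
    simp [h1, h2]
  · rintro ⟨⟨n1, n2⟩, k⟩ hp
    simp only [Finset.mem_filter, Finset.mem_sigma, Finset.mem_Icc] at hp
    have h1 : n1 - k + k = n1 := by omega
    have h2 : n2 + k - k = n2 := by omega
    simp only [h1, h2]
    ring

lemma reindex2 (S T : Finset (ℕ × ℕ)) (f M : ℕ × ℕ → ℝ)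
    (hS : ∀ m, f m ≠ 0 → m ∈ S)
    (hT : ∀ m ∈ S, ∀ k ∈ Finset.Icc 1 m.1, ((m.1 - k, m.2 + k) : ℕ × ℕ) ∈ T) :
    ∑ n ∈ T, ∑ k ∈ Finset.Icc 1 n.2, (k:ℝ)⁻¹ * f (n.1 + k, n.2 - k) * M n
      = ∑ m ∈ S, ∑ k ∈ Finset.Icc 1 m.1, f m * ((k:ℝ)⁻¹ * M (m.1 - k, m.2 + k)) := by
  rw [Finset.sum_sigma', Finset.sum_sigma']
  have drop : ∑ p ∈ T.sigma fun n => Finset.Icc 1 n.2,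
        ((p.2:ℝ)⁻¹ * f (p.1.1 + p.2, p.1.2 - p.2) * M p.1)
      = ∑ p ∈ (T.sigma fun n => Finset.Icc 1 n.2).filter
          (fun p => ((p.1.1 + p.2, p.1.2 - p.2) : ℕ × ℕ) ∈ S),
        ((p.2:ℝ)⁻¹ * f (p.1.1 + p.2, p.1.2 - p.2) * M p.1) := by
    refine (Finset.sum_filter_of_ne ?_).symm
    intro p hp h
    by_contra hs
    have : f (p.1.1 + p.2, p.1.2 - p.2) = 0 := by
      by_contra h0
      exact hs (hS _ h0)
    simp [this] at h
  rw [drop]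
  refine Finset.sum_nbij'
    (i := fun p => ⟨(p.1.1 + p.2, p.1.2 - p.2), p.2⟩)
    (j := fun q => ⟨(q.1.1 - q.2, q.1.2 + q.2), q.2⟩) ?_ ?_ ?_ ?_ ?_
  · rintro ⟨⟨n1, n2⟩, k⟩ hp
    simp only [Finset.mem_filter, Finset.mem_sigma, Finset.mem_Icc] at hp ⊢
    exact ⟨hp.2, by omega, by omega⟩
  · rintro ⟨⟨m1, m2⟩, k⟩ hq
    simp only [Finset.mem_filter, Finset.mem_sigma, Finset.mem_Icc] at hq ⊢
    refine ⟨⟨hT _ hq.1 k (Finset.mem_Icc.2 hq.2), by omega, by omega⟩, ?_⟩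
    have h1 : m1 - k + k = m1 := by omega
    have h2 : m2 + k - k = m2 := by omega
    rw [h1, h2]
    exact hq.1
  · rintro ⟨⟨n1, n2⟩, k⟩ hp
    simp only [Finset.mem_filter, Finset.mem_sigma, Finset.mem_Icc] at hp
    have h1 : n1 + k - k = n1 := by omega
    have h2 : n2 - k + k = n2 := by omega
    simp [h1, h2]
  · rintro ⟨⟨m1, m2⟩, k⟩ hq
    simp only [Finset.mem_filter, Finset.mem_sigma, Finset.mem_Icc] at hq
    have h1 : m1 - k + k = m1 := by omega
    have h2 : m2 + k - k = m2 := by omega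
    simp [h1, h2]
  · rintro ⟨⟨n1, n2⟩, k⟩ hp
    simp only [Finset.mem_filter, Finset.mem_sigma, Finset.mem_Icc] at hp
    have h1 : n1 + k - k = n1 := by omega
    have h2 : n2 - k + k = n2 := by omega
    simp only [h1, h2]
    ring

lemma expand1 (s : Finset ℕ) (p : ℕ → ℝ) (q M : ℝ) :
    (∑ k ∈ s, (k:ℝ)⁻¹ * (p k - q)) * M
      = (∑ k ∈ s, (k:ℝ)⁻¹ * p k * M) - (∑ k ∈ s, (k:ℝ)⁻¹) * q * M := by
  rw [Finset.sum_mul, Finset.sum_mul, Finset.sum_mul, ← Finset.sum_sub_distrib]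
  exact Finset.sum_congr rfl fun k _ => by ring


/-- Poisson intertwining between the discrete and the continuous harmonic models on a
single edge: the Poisson generating transform of `L_d f` equals the continuous harmonic
generator applied to the Poisson generating transform of `f`. -/
theorem harmonic_poisson_intertwining (f : ℕ × ℕ → ℝ)
    (hf : (Function.support f).Finite) (y₁ y₂ : ℝ) (hy₁ : 0 ≤ y₁) (hy₂ : 0 ≤ y₂) :
    IntegrableOn (fun u : ℝ =>
      u⁻¹ * (poissonTransform f (y₁ * (1 - u)) (y₂ + u * y₁) +
             poissonTransform f (y₁ + u * y₂) (y₂ * (1 - u)) -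
             2 * poissonTransform f y₁ y₂)) (Set.Ioo 0 1) volume ∧
    poissonTransform (discreteHarmonicGen f) y₁ y₂
      = ∫ u in Set.Ioo (0:ℝ) 1,
          u⁻¹ * (poissonTransform f (y₁ * (1 - u)) (y₂ + u * y₁) +
                 poissonTransform f (y₁ + u * y₂) (y₂ * (1 - u)) -
                 2 * poissonTransform f y₁ y₂) := by
  classical
  set S := hf.toFinset with hSdef
  have hSmem : ∀ m : ℕ × ℕ, f m ≠ 0 → m ∈ S := fun m h => hf.mem_toFinset.2 h
  set N := S.sup (fun m => m.1 + m.2) with hNdef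
  have hNle : ∀ m ∈ S, m.1 + m.2 ≤ N := fun m hm => Finset.le_sup (f := fun m : ℕ × ℕ => m.1 + m.2) hm
  set T : Finset (ℕ × ℕ) := Finset.range (N+1) ×ˢ Finset.range (N+1) with hTdef
  have hmemT : ∀ n : ℕ × ℕ, n ∈ T ↔ n.1 ≤ N ∧ n.2 ≤ N := by
    intro n
    rw [hTdef, Finset.mem_product, Finset.mem_range, Finset.mem_range]
    omega
  have hST : S ⊆ T := fun m hm => (hmemT m).2 ⟨by have := hNle m hm; omega,
    by have := hNle m hm; omega⟩
  have hfzero : ∀ n : ℕ × ℕ, N < n.1 + n.2 → f n = 0 := by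
    intro n h
    by_contra h0
    have := hNle n (hSmem n h0)
    omega
  have hsupp : ∀ n : ℕ × ℕ, discreteHarmonicGen f n ≠ 0 → n ∈ T := by
    intro n h
    by_contra hn
    apply h
    have hbig : N < n.1 + n.2 := by
      have := (hmemT n).2
      by_contra hb
      exact hn (this ⟨by omega, by omega⟩)
    have hfn : f n = 0 := hfzero n (by omega)
    unfold discreteHarmonicGen
    rw [Finset.sum_eq_zero, Finset.sum_eq_zero, add_zero]
    · intro k hk
      rw [Finset.mem_Icc] at hk
      rw [hfn, hfzero (n.1 + k, n.2 - k) (by simp only []; omega)]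
      simp
    · intro k hk
      rw [Finset.mem_Icc] at hk
      rw [hfn, hfzero (n.1 - k, n.2 + k) (by simp only []; omega)]
      simp
  set M : ℕ × ℕ → ℝ := fun p => y₁ ^ p.1 * y₂ ^ p.2 / (p.1.factorial * p.2.factorial) with hMdef
  have lhs_eq : poissonTransform (discreteHarmonicGen f) y₁ y₂
      = (∑ m ∈ S, ∑ k ∈ Finset.Icc 1 m.2, f m * ((k:ℝ)⁻¹ * M (m.1 + k, m.2 - k)))
        + (∑ m ∈ S, ∑ k ∈ Finset.Icc 1 m.1, f m * ((k:ℝ)⁻¹ * M (m.1 - k, m.2 + k)))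
        - ∑ m ∈ S, ((∑ k ∈ Finset.Icc 1 m.1, (k:ℝ)⁻¹) + ∑ k ∈ Finset.Icc 1 m.2, (k:ℝ)⁻¹)
            * (f m * M m) := by
    rw [pt_eq_sum _ T hsupp]
    have pern : ∀ n ∈ T,
        discreteHarmonicGen f n * y₁ ^ n.1 * y₂ ^ n.2 / (n.1.factorial * n.2.factorial)
        = (∑ k ∈ Finset.Icc 1 n.1, (k:ℝ)⁻¹ * f (n.1 - k, n.2 + k) * M n)
          + (∑ k ∈ Finset.Icc 1 n.2, (k:ℝ)⁻¹ * f (n.1 + k, n.2 - k) * M n)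
          - ((∑ k ∈ Finset.Icc 1 n.1, (k:ℝ)⁻¹) + ∑ k ∈ Finset.Icc 1 n.2, (k:ℝ)⁻¹)
              * (f n * M n) := by
      intro n _
      have hM : discreteHarmonicGen f n * y₁ ^ n.1 * y₂ ^ n.2 / (n.1.factorial * n.2.factorial)
          = discreteHarmonicGen f n * M n := by
        rw [hMdef]
        ring
      rw [hM]
      show (_ + _) * M n = _
      rw [add_mul, expand1, expand1]
      ring
    rw [Finset.sum_congr rfl pern, Finset.sum_sub_distrib, Finset.sum_add_distrib]
    congr 1
    congr 1
    · exact reindex1 S T f M hSmem (by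
        intro m hm k hk
        rw [Finset.mem_Icc] at hk
        have := hNle m hm
        exact (hmemT _).2 ⟨by simp only []; omega, by simp only []; omega⟩)
    · exact reindex2 S T f M hSmem (by
        intro m hm k hk
        rw [Finset.mem_Icc] at hk
        have := hNle m hm
        exact (hmemT _).2 ⟨by simp only []; omega, by simp only []; omega⟩)
    · refine (Finset.sum_subset hST ?_).symm
      intro n _ hn
      have : f n = 0 := by
        by_contra h0
        exact hn (hSmem n h0)
      rw [this]
      ring
  have ptd : ∀ z w : ℝ, poissonTransform f z w
      = ∑ m ∈ S, f m * z ^ m.1 * w ^ m.2 / (m.1.factorial * m.2.factorial) :=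
    fun z w => pt_eq_sum f S hSmem z w
  have integrand_eq : ∀ u ∈ Ioo (0:ℝ) 1,
      u⁻¹ * (poissonTransform f (y₁ * (1 - u)) (y₂ + u * y₁) +
             poissonTransform f (y₁ + u * y₂) (y₂ * (1 - u)) -
             2 * poissonTransform f y₁ y₂)
        = ∑ m ∈ S, (f m / (m.1.factorial * m.2.factorial)) *
            ((fun u : ℝ => u⁻¹ * ((y₁*(1-u))^m.1 * (y₂+u*y₁)^m.2 - y₁^m.1*y₂^m.2)) u +
             (fun u : ℝ => u⁻¹ * ((y₂*(1-u))^m.2 * (y₁+u*y₂)^m.1 - y₂^m.2*y₁^m.1)) u) := by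
    intro u _
    rw [ptd, ptd, ptd, Finset.mul_sum, ← Finset.sum_add_distrib, ← Finset.sum_sub_distrib,
      Finset.mul_sum]
    refine Finset.sum_congr rfl fun m _ => ?_
    simp only []
    ring
  have hint : ∀ m ∈ S, IntegrableOn (fun u : ℝ =>
      (f m / (m.1.factorial * m.2.factorial)) *
        ((fun u : ℝ => u⁻¹ * ((y₁*(1-u))^m.1 * (y₂+u*y₁)^m.2 - y₁^m.1*y₂^m.2)) u +
         (fun u : ℝ => u⁻¹ * ((y₂*(1-u))^m.2 * (y₁+u*y₂)^m.1 - y₂^m.2*y₁^m.1)) u))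
      (Ioo 0 1) volume := by
    intro m _
    exact ((half_int m.1 m.2 y₁ y₂).1.add (half_int m.2 m.1 y₂ y₁).1).const_mul _
  constructor
  · rw [integrableOn_congr_fun integrand_eq measurableSet_Ioo]
    exact MeasureTheory.integrable_finset_sum _ hint
  · rw [MeasureTheory.setIntegral_congr_fun measurableSet_Ioo integrand_eq,
      MeasureTheory.integral_finset_sum _ hint, lhs_eq]
    have perint : ∀ m ∈ S, (∫ u in Ioo (0:ℝ) 1,
        (f m / (m.1.factorial * m.2.factorial)) *
          ((fun u : ℝ => u⁻¹ * ((y₁*(1-u))^m.1 * (y₂+u*y₁)^m.2 - y₁^m.1*y₂^m.2)) u +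
           (fun u : ℝ => u⁻¹ * ((y₂*(1-u))^m.2 * (y₁+u*y₂)^m.1 - y₂^m.2*y₁^m.1)) u))
        = (f m / (m.1.factorial * m.2.factorial)) *
            ((m.1.factorial * m.2.factorial : ℝ) *
              ((∑ k ∈ Finset.Icc 1 m.2, (k:ℝ)⁻¹ *
                  (y₁^(m.1+k) * y₂^(m.2-k) / ((m.1+k).factorial * (m.2-k).factorial)))
               - (∑ k ∈ Finset.Icc 1 m.1, (k:ℝ)⁻¹) *
                  (y₁^m.1 * y₂^m.2 / (m.1.factorial * m.2.factorial)))
             + (m.2.factorial * m.1.factorial : ℝ) *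
              ((∑ k ∈ Finset.Icc 1 m.1, (k:ℝ)⁻¹ *
                  (y₂^(m.2+k) * y₁^(m.1-k) / ((m.2+k).factorial * (m.1-k).factorial)))
               - (∑ k ∈ Finset.Icc 1 m.2, (k:ℝ)⁻¹) *
                  (y₂^m.2 * y₁^m.1 / (m.2.factorial * m.1.factorial)))) := by
      intro m _
      rw [MeasureTheory.integral_const_mul,
        MeasureTheory.integral_add (half_int m.1 m.2 y₁ y₂).1 (half_int m.2 m.1 y₂ y₁).1,
        (half_int m.1 m.2 y₁ y₂).2, (half_int m.2 m.1 y₂ y₁).2]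
    rw [Finset.sum_congr rfl perint, ← Finset.sum_add_distrib, ← Finset.sum_sub_distrib]
    refine Finset.sum_congr rfl fun m _ => ?_
    have hd : (m.1.factorial * m.2.factorial : ℝ) ≠ 0 := by positivity
    have e1 : (∑ k ∈ Finset.Icc 1 m.2, (k:ℝ)⁻¹ *
          (y₁^(m.1+k) * y₂^(m.2-k) / ((m.1+k).factorial * (m.2-k).factorial)))
        = ∑ k ∈ Finset.Icc 1 m.2, (k:ℝ)⁻¹ * M (m.1 + k, m.2 - k) :=
      Finset.sum_congr rfl fun k _ => by rw [hMdef]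
    have e2 : (∑ k ∈ Finset.Icc 1 m.1, (k:ℝ)⁻¹ *
          (y₂^(m.2+k) * y₁^(m.1-k) / ((m.2+k).factorial * (m.1-k).factorial)))
        = ∑ k ∈ Finset.Icc 1 m.1, (k:ℝ)⁻¹ * M (m.1 - k, m.2 + k) :=
      Finset.sum_congr rfl fun k _ => by rw [hMdef]; ring
    rw [e1, e2, ← Finset.mul_sum, ← Finset.mul_sum, hMdef]
    simp only []
    field_simp
    ring
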